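/- The set of idempotents of the inverse semigroup S_X equals E_X = {E(F;v) : v ∈ A*, F ⊆ A* finite} ∪ {0}. -/

import Mathlib

open Function

/-- The one-sided shift map on `ℕ → A`. -/
def shft {A : Type*} (x : ℕ → A) : ℕ → A := fun n => x (n + 1)

/-- Concatenation of a finite word `w` with an infinite word `x`. -/
def wcat {A : Type*} (w : List A) (x : ℕ → A) : ℕ → A :=
  fun n => w.getD n (x (n - w.length))

/-- Partial bijections on `ℕ → A` modelled as relations (sets of pairs (input, output)). -/
abbrev PB (A : Type*) := Set ((ℕ → A) × (ℕ → A))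

/-- Composition on the largest possible domain: `rcomp r s` applies `s` first, then `r`
(i.e. the semigroup product `r · s`). -/
def rcomp {A : Type*} (r s : PB A) : PB A := {p | ∃ y, (p.1, y) ∈ s ∧ (y, p.2) ∈ r}

/-- Inverse of a partial bijection. -/
def rinv {A : Type*} (r : PB A) : PB A := {p | (p.2, p.1) ∈ r}

/-- The identity map on a subset `U`. -/
def idOn {A : Type*} (U : Set (ℕ → A)) : PB A := {p | p.1 ∈ U ∧ p.2 = p.1}

/-- The partial bijection `s_μ : x ↦ μx` on `{x ∈ X : μx ∈ X}`. -/
def sMap {A : Type*} (X : Set (ℕ → A)) (μ : List A) : PB A :=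
  {p | p.1 ∈ X ∧ wcat μ p.1 ∈ X ∧ p.2 = wcat μ p.1}

/-- The cylinder set `C(v) = {vx : x ∈ A^ℕ} ∩ X`. -/
def Cyl {A : Type*} (X : Set (ℕ → A)) (v : List A) : Set (ℕ → A) :=
  {y | y ∈ X ∧ ∃ x, y = wcat v x}

/-- `C(μ,ν) = {νx ∈ X : μx ∈ X}`. -/
def Cmn {A : Type*} (X : Set (ℕ → A)) (μ ν : List A) : Set (ℕ → A) :=
  {y | ∃ x, y = wcat ν x ∧ y ∈ X ∧ wcat μ x ∈ X}

/-- `C(F;v) = {vx ∈ X : fx ∈ X for all f ∈ F}`. -/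
def CFv {A : Type*} (X : Set (ℕ → A)) (F : Finset (List A)) (v : List A) : Set (ℕ → A) :=
  {y | ∃ x, y = wcat v x ∧ y ∈ X ∧ ∀ f ∈ F, wcat f x ∈ X}

/-- The idempotent `E(F;v) = Id_{C(F;v)}`. -/
def Efv {A : Type*} (X : Set (ℕ → A)) (F : Finset (List A)) (v : List A) : PB A :=
  idOn (CFv X F v)

/-- The set `E_X = {E(F;v)} ∪ {0}` of idempotents. -/
def EXset {A : Type*} (X : Set (ℕ → A)) : Set (PB A) :=
  {r | r = ∅ ∨ ∃ (F : Finset (List A)) (v : List A), r = Efv X F v}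

/-- The element `s_α E(F;v) s_β^*` of `I(X)`. -/
def elt {A : Type*} (X : Set (ℕ → A)) (α : List A) (F : Finset (List A)) (v β : List A) :
    PB A :=
  rcomp (rcomp (sMap X α) (Efv X F v)) (rinv (sMap X β))

/-- The inverse semigroup `S_X = {s_α E(F;v) s_β^*} ∪ {0}` (closed form). -/
def SXset {A : Type*} (X : Set (ℕ → A)) : Set (PB A) :=
  {r | r = ∅ ∨ ∃ (α β v : List A) (F : Finset (List A)), r = elt X α F v β}

/-- `α` and `β` are in lowest terms: they do not both end with the same letter. -/
def LowTerms {A : Type*} (α β : List A) : Prop :=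
  ∀ a : A, ¬(α.getLast? = some a ∧ β.getLast? = some a)

/-- A word viewed as an element of the free group on `A`. -/
def wgrp {A : Type*} (w : List A) : FreeGroup A := (w.map FreeGroup.of).prod

/-- Natural partial order on partial bijections: `s ≤ t` iff `t s^* s = s`. -/
def rle {A : Type*} (s t : PB A) : Prop := rcomp t (rcomp (rinv s) s) = s

/-- `P_k(x) = {μ ∈ A^k : μx ∈ X}`. -/
def Pk {A : Type*} (X : Set (ℕ → A)) (k : ℕ) (x : ℕ → A) : Set (List A) :=
  {μ | μ.length = k ∧ wcat μ x ∈ X}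

/-- `l`-past equivalence: `P_r(x) = P_r(y)` for all `r ≤ l`. -/
def pastEq {A : Type*} (X : Set (ℕ → A)) (l : ℕ) (x y : ℕ → A) : Prop :=
  ∀ r ≤ l, Pk X r x = Pk X r y

/-- The relation `x ~_{(k,l)} y`. -/
def klEq {A : Type*} (X : Set (ℕ → A)) (k l : ℕ) (x y : ℕ → A) : Prop :=
  (∀ i < k, x i = y i) ∧ pastEq X l (shft^[k] x) (shft^[k] y)


lemma wcat_nil {A : Type*} (x : ℕ → A) : wcat ([] : List A) x = x := by
  funext n; simp [wcat]

lemma wcat_apply_add {A : Type*} (w : List A) (x : ℕ → A) (n : ℕ) :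
    wcat w x (n + w.length) = x n := by
  simp only [wcat]
  rw [List.getD_eq_default _ _ (by omega), Nat.add_sub_cancel]

lemma wcat_right_inj {A : Type*} {w : List A} {x x' : ℕ → A}
    (h : wcat w x = wcat w x') : x = x' := by
  funext n
  have := congrFun h (n + w.length)
  rwa [wcat_apply_add, wcat_apply_add] at this

lemma wcat_append {A : Type*} (a b : List A) (x : ℕ → A) :
    wcat (a ++ b) x = wcat a (wcat b x) := by
  funext n
  simp only [wcat, List.length_append]
  rcases lt_or_ge n a.length with h | h
  · rw [List.getD_append _ _ _ _ h, List.getD_eq_getElem _ _ h, List.getD_eq_getElem _ _ h]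
  · rw [List.getD_append_right _ _ _ _ h, List.getD_eq_default _ _ h,
      show n - (a.length + b.length) = n - a.length - b.length by omega]

lemma mem_elt_iff {A : Type*} (X : Set (ℕ → A)) (α : List A) (F : Finset (List A))
    (v β : List A) (z w : ℕ → A) :
    (z, w) ∈ elt X α F v β ↔ ∃ x, wcat v x ∈ X ∧ wcat β (wcat v x) ∈ X ∧
      wcat α (wcat v x) ∈ X ∧ (∀ f ∈ F, wcat f x ∈ X) ∧
      z = wcat β (wcat v x) ∧ w = wcat α (wcat v x) := by
  constructor
  · rintro ⟨y, hy, u, hu2, hw2⟩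
    dsimp only [rinv, sMap, Efv, idOn, CFv, Set.mem_setOf_eq] at hy hu2 hw2
    obtain ⟨hyX, hβy, hz⟩ := hy
    obtain ⟨⟨x, hyv, _, hff⟩, hu⟩ := hu2
    obtain ⟨_, hαu, hw⟩ := hw2
    dsimp only at *; subst hyv; subst hu
    exact ⟨x, hyX, hz ▸ hβy, hw ▸ hαu, hff, hz, hw⟩
  · rintro ⟨x, h1, h2, h3, h4, h5, h6⟩
    exact ⟨wcat v x, ⟨h1, h2, h5⟩, wcat v x, ⟨⟨x, rfl, h1, h4⟩, rfl⟩, h1, h3, h6⟩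

theorem stmt6 {A : Type*} [Fintype A] [TopologicalSpace A] [DiscreteTopology A]
    (X : Set (ℕ → A)) (hXcl : IsClosed X) (hXsh : ∀ x ∈ X, shft x ∈ X) :
    {r ∈ SXset X | rcomp r r = r} = EXset X := by
  classical
  ext r
  simp only [Set.mem_sep_iff, SXset, EXset, Set.mem_setOf_eq]
  constructor
  · rintro ⟨(rfl | ⟨α, β, v, F, rfl⟩), hid⟩
    · exact Or.inl rfl
    · right
      have hdiag : ∀ z w, (z, w) ∈ elt X α F v β → z = w := by
        intro z w hzw
        have hzw' := hzw
        rw [← hid] at hzw'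
        obtain ⟨y, hzy, hyw⟩ := hzw'
        obtain ⟨x, _, _, _, _, hz1, hw1⟩ := (mem_elt_iff X α F v β z w).1 hzw
        obtain ⟨x', _, _, _, _, hz2, hy2⟩ := (mem_elt_iff X α F v β z y).1 hzy
        have hxx : x = x' := wcat_right_inj (wcat_right_inj (hz1 ▸ hz2))
        have hyw' : y = w := by rw [hy2, ← hxx, ← hw1]
        rw [hyw'] at hyw
        obtain ⟨x'', _, _, _, _, hy3, hw3⟩ := (mem_elt_iff X α F v β w w).1 hyw
        have hxx2 : x = x'' := wcat_right_inj (wcat_right_inj (hw1 ▸ hw3))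
        rw [hz1, hxx2, ← hy3]
      refine ⟨insert (α ++ v) (insert v F), β ++ v, ?_⟩
      ext ⟨z, w⟩
      simp only [Efv, idOn, CFv, Set.mem_setOf_eq]
      constructor
      · intro hp
        obtain ⟨x, h1, h2, h3, h4, h5, h6⟩ := (mem_elt_iff X α F v β z w).1 hp
        have hd : z = w := hdiag z w hp
        refine ⟨⟨x, ?_, ?_, ?_⟩, hd.symm⟩
        · rw [h5, wcat_append]
        · rw [h5]; exact h2
        · intro f hf
          rcases Finset.mem_insert.1 hf with rfl | hf
          · rw [wcat_append]; exact h3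
          · rcases Finset.mem_insert.1 hf with rfl | hf
            · exact h1
            · exact h4 f hf
      · rintro ⟨⟨x, hpx, hX, hf⟩, hpp⟩
        have hv : wcat v x ∈ X := hf v (Finset.mem_insert.2 (Or.inr (Finset.mem_insert_self _ _)))
        have hαv : wcat α (wcat v x) ∈ X := by
          rw [← wcat_append]; exact hf _ (Finset.mem_insert_self _ _)
        have hβv : wcat β (wcat v x) ∈ X := by rw [← wcat_append, ← hpx]; exact hX
        have hmem : (z, wcat α (wcat v x)) ∈ elt X α F v β := by
          refine (mem_elt_iff X α F v β _ _).2 ⟨x, hv, hβv, hαv, ?_, ?_, rfl⟩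
          · intro f hfF
            exact hf f (Finset.mem_insert.2 (Or.inr (Finset.mem_insert.2 (Or.inr hfF))))
          · rw [hpx, wcat_append]
        have heq := hdiag _ _ hmem
        have hw2 : w = wcat α (wcat v x) := by rw [hpp, heq]
        rw [hw2]; exact hmem
  · rintro (rfl | ⟨F, v, rfl⟩)
    · refine ⟨Or.inl rfl, ?_⟩
      ext p
      simp [rcomp]
    · constructor
      · right
        refine ⟨[], [], v, F, ?_⟩
        ext ⟨z, w⟩
        rw [mem_elt_iff]
        simp only [Efv, idOn, CFv, Set.mem_setOf_eq, wcat_nil]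
        constructor
        · rintro ⟨⟨x, rfl, hX, hfs⟩, rfl⟩
          exact ⟨x, hX, hX, hX, hfs, rfl, rfl⟩
        · rintro ⟨x, h1, _, _, h4, h5, h6⟩
          exact ⟨⟨x, h5, h5 ▸ h1, h4⟩, by rw [h5, h6]⟩
      · ext ⟨z, w⟩
        simp only [rcomp, Efv, idOn, Set.mem_setOf_eq]
        constructor
        · rintro ⟨y, ⟨h1, rfl⟩, h2, h3⟩
          exact ⟨h1, h3⟩
        · rintro ⟨h1, h2⟩
          exact ⟨z, ⟨h1, rfl⟩, h1, h2⟩
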